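/- Let A be an integral domain, ⋆ a star operation of finite type on A, and 𝔞 a proper ⋆-finite ⋆-ideal of A satisfying property (⋆-c.a.). Then the set 𝔪_𝔞 := {x ∈ A : ((x) + 𝔞)^⋆ ≠ A} is an ideal of A, and it is the unique ⋆-maximal ideal of A containing 𝔞. -/
import Mathlib


open scoped nonZeroDivisors

/-- A star operation on an integral domain `A` with quotient field `K`: a map on
(nonzero) fractional ideals satisfying `A^⋆ = A`, `(xI)^⋆ = x·I^⋆`, `I ⊆ I^⋆`,
monotonicity and idempotency. -/
structure StarOperation (A : Type*) [CommRing A] [IsDomain A]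
    (K : Type*) [Field K] [Algebra A K] [IsFractionRing A K] where
  star : FractionalIdeal A⁰ K → FractionalIdeal A⁰ K
  star_one : star 1 = 1
  star_smul : ∀ (x : K), x ≠ 0 → ∀ I : FractionalIdeal A⁰ K, I ≠ 0 →
    star (FractionalIdeal.spanSingleton A⁰ x * I) = FractionalIdeal.spanSingleton A⁰ x * star I
  le_star : ∀ I : FractionalIdeal A⁰ K, I ≠ 0 → I ≤ star I
  mono : ∀ I J : FractionalIdeal A⁰ K, I ≠ 0 → I ≤ J → star I ≤ star J
  star_idem : ∀ I : FractionalIdeal A⁰ K, I ≠ 0 → star (star I) = star I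

variable {A : Type*} [CommRing A] [IsDomain A]
  {K : Type*} [Field K] [Algebra A K] [IsFractionRing A K]

/-- `⋆` is of finite type: `I^⋆` is the union of the `J^⋆` over the finitely
generated (nonzero) fractional ideals `J ⊆ I`. -/
def StarOperation.IsFiniteType (s : StarOperation A K) : Prop :=
  ∀ I : FractionalIdeal A⁰ K, I ≠ 0 → ∀ x : K, x ∈ s.star I →
    ∃ J : FractionalIdeal A⁰ K, J ≠ 0 ∧ J ≤ I ∧ (J : Submodule A K).FG ∧ x ∈ s.star J

/-- A (nonzero, integral) ideal `I` is a `⋆`-ideal if `I^⋆ = I`. -/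
def IsStarIdeal (s : StarOperation A K) (I : Ideal A) : Prop :=
  I ≠ 0 ∧ s.star ↑I = (I : FractionalIdeal A⁰ K)

/-- A (nonzero, integral) ideal `I` is `⋆`-finite if `J^⋆ = I^⋆` for some finitely
generated (nonzero) ideal `J`. -/
def IsStarFinite (s : StarOperation A K) (I : Ideal A) : Prop :=
  I ≠ 0 ∧ ∃ J : Ideal A, J ≠ 0 ∧ J.FG ∧ s.star ↑J = s.star (I : FractionalIdeal A⁰ K)

/-- An ideal of `A` is `⋆`-maximal if it is maximal among proper `⋆`-ideals. -/
def IsStarMaximal (s : StarOperation A K) (M : Ideal A) : Prop :=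
  M ≠ ⊤ ∧ IsStarIdeal s M ∧ ∀ J : Ideal A, J ≠ ⊤ → IsStarIdeal s J → M ≤ J → J = M

/-- Property (⋆-c.a.): for every pair of proper ⋆-finite ⋆-ideals `𝔞₁, 𝔞₂` containing
`𝔞`, the ideal `(𝔞₁ + 𝔞₂)^⋆` is proper. -/
def StarCA (s : StarOperation A K) (𝔞 : Ideal A) : Prop :=
  ∀ 𝔞₁ 𝔞₂ : Ideal A, 𝔞 ≤ 𝔞₁ → 𝔞 ≤ 𝔞₂ →
    𝔞₁ ≠ ⊤ → IsStarIdeal s 𝔞₁ → IsStarFinite s 𝔞₁ →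
    𝔞₂ ≠ ⊤ → IsStarIdeal s 𝔞₂ → IsStarFinite s 𝔞₂ →
    s.star ↑(𝔞₁ + 𝔞₂) ≠ 1

/-- `ℱ` is a ⋆-comaximal collection over `a`: `a` lies in every member and
`(𝔞₁ + 𝔞₂)^⋆ = A` for all distinct members. -/
def IsStarComaximalOver (s : StarOperation A K) (a : A) (F : Set (Ideal A)) : Prop :=
  (∀ I ∈ F, a ∈ I) ∧ ∀ I ∈ F, ∀ J ∈ F, I ≠ J → s.star ↑(I + J) = 1

/-- `(Σ')^⋆_a`: the ⋆-comaximal collections over `a` of proper ⋆-finite ⋆-ideals. -/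
def SigmaP (s : StarOperation A K) (a : A) : Set (Set (Ideal A)) :=
  {F | IsStarComaximalOver s a F ∧ ∀ I ∈ F, I ≠ ⊤ ∧ IsStarIdeal s I ∧ IsStarFinite s I}

/-- `Σ^⋆_a`: members of `(Σ')^⋆_a` all of whose ideals satisfy (⋆-c.a.). -/
def SigmaCA (s : StarOperation A K) (a : A) : Set (Set (Ideal A)) :=
  {F | F ∈ SigmaP s a ∧ ∀ I ∈ F, StarCA s I}


section Aux

variable {A : Type*} [CommRing A] [IsDomain A]
  {K : Type*} [Field K] [Algebra A K] [IsFractionRing A K]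

/-- Auxiliary: if `X ≤ Y^⋆` and `Y ≤ X^⋆` then `X^⋆ = Y^⋆`. -/
private lemma star_eq_star_aux (s : StarOperation A K) {X Y : FractionalIdeal A⁰ K}
    (hX : X ≠ 0) (hY : Y ≠ 0) (h1 : X ≤ s.star Y) (h2 : Y ≤ s.star X) :
    s.star X = s.star Y := by
  refine le_antisymm ?_ ?_
  · have h := s.mono X (s.star Y) hX h1
    rwa [s.star_idem Y hY] at h
  · have h := s.mono Y (s.star X) hY h2
    rwa [s.star_idem X hX] at h

/-- Auxiliary: a proper ⋆-finite ⋆-ideal containing `𝔞`. -/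
private def GoodIdeal (s : StarOperation A K) (𝔞 B : Ideal A) : Prop :=
  𝔞 ≤ B ∧ B ≠ ⊤ ∧ IsStarIdeal s B ∧ IsStarFinite s B

end Aux

/-- Let `A` be an integral domain, `⋆` a finite type star operation on `A`, and `𝔞` a
proper ⋆-finite ⋆-ideal of `A` satisfying property (⋆-c.a.). Then
`𝔪_𝔞 = {x ∈ A : ((x) + 𝔞)^⋆ ≠ A}` is an ideal of `A`, and it is the unique ⋆-maximal
ideal of `A` containing `𝔞`. -/
theorem star_ca_unique_star_maximal
    (s : StarOperation A K) (hs : s.IsFiniteType) (𝔞 : Ideal A) (h𝔞top : 𝔞 ≠ ⊤)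
    (h𝔞star : IsStarIdeal s 𝔞) (h𝔞fin : IsStarFinite s 𝔞) (h𝔞ca : StarCA s 𝔞) :
    ∃ 𝔪 : Ideal A,
      (𝔪 : Set A) = {x : A | s.star ↑(Ideal.span {x} + 𝔞) ≠ 1} ∧
      IsStarMaximal s 𝔪 ∧ 𝔞 ≤ 𝔪 ∧
      ∀ 𝔫 : Ideal A, IsStarMaximal s 𝔫 → 𝔞 ≤ 𝔫 → 𝔫 = 𝔪 := by
    classical
  obtain ⟨h𝔞0, h𝔞eq⟩ := h𝔞star
  have le_ne : ∀ {I J : Ideal A}, I ≠ 0 → I ≤ J → J ≠ 0 := by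
    intro I J hI hIJ hJ
    rw [hJ, Submodule.zero_eq_bot, le_bot_iff, ← Submodule.zero_eq_bot] at hIJ
    exact hI hIJ
  have cne : ∀ {I : Ideal A}, I ≠ 0 → (I : FractionalIdeal A⁰ K) ≠ 0 := by
    intro I h
    rw [Ne, FractionalIdeal.coeIdeal_eq_zero, ← Submodule.zero_eq_bot]
    exact h
  have hne : ∀ I : Ideal A, 𝔞 ≤ I → (I : FractionalIdeal A⁰ K) ≠ 0 :=
    fun I hI => cne (le_ne h𝔞0 hI)
  have hsle1 : ∀ I : Ideal A, 𝔞 ≤ I → s.star ↑I ≤ 1 := by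
    intro I hI
    have h := s.mono ↑I 1 (hne I hI) FractionalIdeal.coeIdeal_le_one
    rwa [s.star_one] at h
  have hcoe1 : ∀ I : Ideal A, ((I : FractionalIdeal A⁰ K) = 1 ↔ I = ⊤) := by
    intro I
    rw [← FractionalIdeal.coeIdeal_top]
    exact FractionalIdeal.coeIdeal_inj
  have ile : ∀ {I J : Ideal A}, I ≤ J → (I : FractionalIdeal A⁰ K) ≤ J := fun h =>
    (FractionalIdeal.coeIdeal_le_coeIdeal K).mpr h
  have ige : ∀ {I J : Ideal A}, (I : FractionalIdeal A⁰ K) ≤ J → I ≤ J := fun h =>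
    (FractionalIdeal.coeIdeal_le_coeIdeal K).mp h
  have a_le : ∀ x : A, 𝔞 ≤ Ideal.span {x} + 𝔞 := by
    intro x
    rw [Ideal.add_eq_sup]
    exact le_sup_right
  -- upgrading an ideal whose star is a proper "finite" star to a good ideal
  have upgrade : ∀ I : Ideal A, 𝔞 ≤ I →
      (∃ J : Ideal A, J ≠ 0 ∧ J.FG ∧ s.star ↑J = s.star (I : FractionalIdeal A⁰ K)) →
      s.star (I : FractionalIdeal A⁰ K) ≠ 1 →
      ∃ B : Ideal A, GoodIdeal s 𝔞 B ∧ s.star (I : FractionalIdeal A⁰ K) = ↑B := by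
    intro I hI hfin hne1
    obtain ⟨B, hB⟩ := FractionalIdeal.le_one_iff_exists_coeIdeal.mp (hsle1 I hI)
    have h𝔞B : 𝔞 ≤ B := by
      refine ige ?_
      calc (𝔞 : FractionalIdeal A⁰ K) ≤ ↑I := ile hI
        _ ≤ s.star ↑I := s.le_star _ (hne I hI)
        _ = ↑B := hB.symm
    have hstarB : s.star ↑B = (B : FractionalIdeal A⁰ K) := by
      rw [hB]
      exact s.star_idem _ (hne I hI)
    have hBtop : B ≠ ⊤ := by
      intro h
      exact hne1 (by rw [← hB, (hcoe1 B).mpr h])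
    have hB0 : B ≠ 0 := le_ne h𝔞0 h𝔞B
    obtain ⟨J, hJ0, hJfg, hJeq⟩ := hfin
    exact ⟨B, ⟨h𝔞B, hBtop, ⟨hB0, hstarB⟩,
      ⟨hB0, J, hJ0, hJfg, by rw [hJeq, hstarB, hB]⟩⟩, hB.symm⟩
  -- star of a sup is determined by finitely generated sub-witnesses
  have starSup : ∀ I₁ I₂ J₁ J₂ : Ideal A, J₁ ≠ 0 → J₂ ≠ 0 → J₁ ≤ I₁ → J₂ ≤ I₂ →
      s.star ↑J₁ = s.star (I₁ : FractionalIdeal A⁰ K) →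
      s.star ↑J₂ = s.star (I₂ : FractionalIdeal A⁰ K) →
      s.star ↑(J₁ ⊔ J₂) = s.star ((I₁ ⊔ I₂ : Ideal A) : FractionalIdeal A⁰ K) := by
    intro I₁ I₂ J₁ J₂ hJ1 hJ2 h1 h2 he1 he2
    have hJs : (J₁ ⊔ J₂ : Ideal A) ≠ 0 := le_ne hJ1 le_sup_left
    have hIs : (I₁ ⊔ I₂ : Ideal A) ≠ 0 := le_ne hJ1 (le_trans h1 le_sup_left)
    refine star_eq_star_aux s (cne hJs) (cne hIs) ?_ ?_
    · calc ((J₁ ⊔ J₂ : Ideal A) : FractionalIdeal A⁰ K) ≤ ↑(I₁ ⊔ I₂) :=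
            ile (sup_le_sup h1 h2)
        _ ≤ s.star ↑(I₁ ⊔ I₂) := s.le_star _ (cne hIs)
    · have key : ∀ J I : Ideal A, J ≠ 0 → J ≤ I →
          s.star ↑J = s.star (I : FractionalIdeal A⁰ K) →
          (J : Ideal A) ≤ J₁ ⊔ J₂ → (I : FractionalIdeal A⁰ K) ≤ s.star ↑(J₁ ⊔ J₂) := by
        intro J I hJ hJI he hle
        calc (I : FractionalIdeal A⁰ K) ≤ s.star ↑I := s.le_star _ (cne (le_ne hJ hJI))
          _ = s.star ↑J := he.symm
          _ ≤ s.star ↑(J₁ ⊔ J₂) := s.mono _ _ (cne hJ) (ile hle)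
      have hc : ((I₁ ⊔ I₂ : Ideal A) : FractionalIdeal A⁰ K) = ↑I₁ ⊔ ↑I₂ := by
        rw [FractionalIdeal.coeIdeal_sup, FractionalIdeal.sup_eq_add]
      rw [hc]
      exact sup_le (key J₁ I₁ hJ1 h1 he1 le_sup_left) (key J₂ I₂ hJ2 h2 he2 le_sup_right)
  obtain ⟨J₀, hJ₀0, hJ₀fg, hJ₀eq⟩ := h𝔞fin.2
  have hJ₀𝔞 : J₀ ≤ 𝔞 := by
    refine ige ?_
    calc (J₀ : FractionalIdeal A⁰ K) ≤ s.star ↑J₀ := s.le_star _ (cne hJ₀0)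
      _ = s.star ↑𝔞 := hJ₀eq
      _ = ↑𝔞 := h𝔞eq
  -- for each `x` in the candidate set, a good ideal representing `(span {x} + 𝔞)^⋆`
  have Hx : ∀ x : A, s.star ↑(Ideal.span {x} + 𝔞) ≠ 1 →
      ∃ B : Ideal A, GoodIdeal s 𝔞 B ∧ s.star ↑(Ideal.span {x} + 𝔞) = ↑B := by
    intro x hx
    refine upgrade _ (a_le x) ?_ hx
    rw [Ideal.add_eq_sup]
    by_cases hx0 : x = 0
    · refine ⟨J₀, hJ₀0, hJ₀fg, ?_⟩
      rw [hJ₀eq]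
      congr 1
      rw [hx0, Ideal.span_singleton_eq_bot.mpr rfl, bot_sup_eq]
    · have hsx : Ideal.span {x} ≠ 0 := by
        rw [Ne, Submodule.zero_eq_bot, Ideal.span_singleton_eq_bot]
        exact hx0
      refine ⟨Ideal.span {x} ⊔ J₀, le_ne hsx le_sup_left, ?_, ?_⟩
      · exact Submodule.FG.sup ⟨{x}, by simp⟩ hJ₀fg
      · exact starSup _ _ _ _ hsx hJ₀0 le_rfl hJ₀𝔞 rfl (by rw [hJ₀eq, h𝔞eq])
  -- combining two good ideals
  have combine : ∀ B₁ B₂ : Ideal A, GoodIdeal s 𝔞 B₁ → GoodIdeal s 𝔞 B₂ →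
      ∃ B : Ideal A, GoodIdeal s 𝔞 B ∧
        s.star ((B₁ ⊔ B₂ : Ideal A) : FractionalIdeal A⁰ K) = ↑B := by
    rintro B₁ B₂ ⟨ha1, ht1, hs1, hf1⟩ ⟨ha2, ht2, hs2, hf2⟩
    refine upgrade _ (le_trans ha1 le_sup_left) ?_ ?_
    · obtain ⟨J₁, hJ₁0, hJ₁fg, hJ₁e⟩ := hf1.2
      obtain ⟨J₂, hJ₂0, hJ₂fg, hJ₂e⟩ := hf2.2
      have hJ₁le : J₁ ≤ B₁ := by
        refine ige ?_
        calc (J₁ : FractionalIdeal A⁰ K) ≤ s.star ↑J₁ := s.le_star _ (cne hJ₁0)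
          _ = s.star ↑B₁ := hJ₁e
          _ = ↑B₁ := hs1.2
      have hJ₂le : J₂ ≤ B₂ := by
        refine ige ?_
        calc (J₂ : FractionalIdeal A⁰ K) ≤ s.star ↑J₂ := s.le_star _ (cne hJ₂0)
          _ = s.star ↑B₂ := hJ₂e
          _ = ↑B₂ := hs2.2
      exact ⟨J₁ ⊔ J₂, le_ne hJ₁0 le_sup_left, Submodule.FG.sup hJ₁fg hJ₂fg,
        starSup _ _ _ _ hJ₁0 hJ₂0 hJ₁le hJ₂le hJ₁e hJ₂e⟩
    · have h := h𝔞ca B₁ B₂ ha1 ha2 ht1 hs1 hf1 ht2 hs2 hf2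
      rwa [Ideal.add_eq_sup] at h
  -- main finite induction
  have main : ∀ T : Finset A, (∀ x ∈ T, s.star ↑(Ideal.span {x} + 𝔞) ≠ 1) →
      ∃ B : Ideal A, GoodIdeal s 𝔞 B ∧
        s.star ↑(Ideal.span (T : Set A) ⊔ 𝔞) = (B : FractionalIdeal A⁰ K) := by
    intro T
    induction T using Finset.induction_on with
    | empty =>
      intro _
      refine ⟨𝔞, ⟨le_rfl, h𝔞top, ⟨h𝔞0, h𝔞eq⟩, h𝔞fin⟩, ?_⟩
      rw [show Ideal.span ((∅ : Finset A) : Set A) ⊔ 𝔞 = 𝔞 by simp, h𝔞eq]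
    | @insert x T hxT ih =>
      intro hall
      obtain ⟨BT, hBTg, hBTe⟩ := ih fun y hy => hall y (Finset.mem_insert_of_mem hy)
      obtain ⟨B₁, hB₁g, hB₁e⟩ := Hx x (hall x (Finset.mem_insert_self x T))
      obtain ⟨B, hBg, hBe⟩ := combine B₁ BT hB₁g hBTg
      refine ⟨B, hBg, ?_⟩
      have hspan : Ideal.span ((insert x T : Finset A) : Set A) ⊔ 𝔞
          = Ideal.span {x} ⊔ Ideal.span (T : Set A) ⊔ 𝔞 := by
        rw [Finset.coe_insert, Ideal.span_insert]
      have hle1 : Ideal.span {x} ⊔ 𝔞 ≤ B₁ := by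
        refine ige ?_
        calc ((Ideal.span {x} ⊔ 𝔞 : Ideal A) : FractionalIdeal A⁰ K)
            ≤ s.star ↑(Ideal.span {x} ⊔ 𝔞) := s.le_star _ (hne _ le_sup_right)
          _ = s.star ↑(Ideal.span {x} + 𝔞) := by rw [Ideal.add_eq_sup]
          _ = ↑B₁ := hB₁e
      have hle2 : Ideal.span (T : Set A) ⊔ 𝔞 ≤ BT := by
        refine ige ?_
        calc ((Ideal.span (T : Set A) ⊔ 𝔞 : Ideal A) : FractionalIdeal A⁰ K)
            ≤ s.star ↑(Ideal.span (T : Set A) ⊔ 𝔞) := s.le_star _ (hne _ le_sup_right)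
          _ = ↑BT := hBTe
      have hXle : Ideal.span ((insert x T : Finset A) : Set A) ⊔ 𝔞 ≤ B₁ ⊔ BT := by
        rw [hspan]
        refine sup_le (sup_le ?_ ?_) ?_
        · exact le_trans (le_trans le_sup_left hle1) le_sup_left
        · exact le_trans (le_trans le_sup_left hle2) le_sup_right
        · exact le_trans (le_trans le_sup_right hle1) le_sup_left
      have hX0 :
          ((Ideal.span ((insert x T : Finset A) : Set A) ⊔ 𝔞 : Ideal A) :
            FractionalIdeal A⁰ K) ≠ 0 :=
        hne _ le_sup_right
      have hY0 : ((B₁ ⊔ BT : Ideal A) : FractionalIdeal A⁰ K) ≠ 0 :=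
        hne _ (le_trans hB₁g.1 le_sup_left)
      have heq : s.star ↑(Ideal.span ((insert x T : Finset A) : Set A) ⊔ 𝔞)
          = s.star ((B₁ ⊔ BT : Ideal A) : FractionalIdeal A⁰ K) := by
        refine star_eq_star_aux s hX0 hY0 ?_ ?_
        · exact le_trans (ile hXle) (s.le_star _ hY0)
        · have h1 : (B₁ : FractionalIdeal A⁰ K)
              ≤ s.star ↑(Ideal.span ((insert x T : Finset A) : Set A) ⊔ 𝔞) := by
            rw [← hB₁e, Ideal.add_eq_sup]
            refine s.mono _ _ (hne _ le_sup_right) (ile ?_)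
            rw [hspan]
            exact sup_le (le_trans le_sup_left le_sup_left) le_sup_right
          have h2 : (BT : FractionalIdeal A⁰ K)
              ≤ s.star ↑(Ideal.span ((insert x T : Finset A) : Set A) ⊔ 𝔞) := by
            rw [← hBTe]
            refine s.mono _ _ (hne _ le_sup_right) (ile ?_)
            rw [hspan]
            exact sup_le (le_trans le_sup_right le_sup_left) le_sup_right
          have hc : ((B₁ ⊔ BT : Ideal A) : FractionalIdeal A⁰ K) = ↑B₁ ⊔ ↑BT := by
            rw [FractionalIdeal.coeIdeal_sup, FractionalIdeal.sup_eq_add]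
          rw [hc]
          exact sup_le h1 h2
      rw [heq, hBe]
  -- every proper star ideal containing 𝔞 is contained in the candidate set
  have mem_of_le : ∀ J : Ideal A, J ≠ ⊤ → IsStarIdeal s J → 𝔞 ≤ J →
      ∀ x ∈ J, s.star ↑(Ideal.span {x} + 𝔞) ≠ 1 := by
    intro J hJt hJs hJa x hxJ h1
    have hle : Ideal.span {x} + 𝔞 ≤ J := by
      rw [Ideal.add_eq_sup]
      exact sup_le ((Ideal.span_singleton_le_iff_mem J).mpr hxJ) hJa
    have h2 := s.mono _ (↑J) (hne _ (a_le x)) (ile hle)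
    rw [h1, hJs.2] at h2
    exact hJt ((hcoe1 J).mp (le_antisymm FractionalIdeal.coeIdeal_le_one h2))
  -- 0 is in the candidate set
  have Pzero : s.star ↑(Ideal.span {(0 : A)} + 𝔞) ≠ 1 := by
    rw [show Ideal.span {(0 : A)} + 𝔞 = 𝔞 by
        rw [Ideal.add_eq_sup, Ideal.span_singleton_eq_bot.mpr rfl, bot_sup_eq],
      h𝔞eq, Ne, hcoe1]
    exact h𝔞top
  -- build the ideal 𝔪
  let 𝔪 : Ideal A :=
    { carrier := {x : A | s.star ↑(Ideal.span {x} + 𝔞) ≠ 1}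
      zero_mem' := Pzero
      add_mem' := by
        intro x y hx hy
        obtain ⟨B₁, hB₁g, hB₁e⟩ := Hx x hx
        obtain ⟨B₂, hB₂g, hB₂e⟩ := Hx y hy
        obtain ⟨B, hBg, hBe⟩ := combine B₁ B₂ hB₁g hB₂g
        have hxB : x ∈ B₁ := by
          refine ige (le_trans (s.le_star _ (hne _ (a_le x))) hB₁e.le) ?_
          rw [Ideal.add_eq_sup]
          exact Submodule.mem_sup_left (Ideal.subset_span rfl)
        have hyB : y ∈ B₂ := by
          refine ige (le_trans (s.le_star _ (hne _ (a_le y))) hB₂e.le) ?_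
          rw [Ideal.add_eq_sup]
          exact Submodule.mem_sup_left (Ideal.subset_span rfl)
        have hBle : B₁ ⊔ B₂ ≤ B := by
          refine ige ?_
          calc ((B₁ ⊔ B₂ : Ideal A) : FractionalIdeal A⁰ K)
              ≤ s.star ↑(B₁ ⊔ B₂) := s.le_star _ (hne _ (le_trans hB₁g.1 le_sup_left))
            _ = ↑B := hBe
        have hxyB : x + y ∈ B :=
          add_mem (hBle (Submodule.mem_sup_left hxB)) (hBle (Submodule.mem_sup_right hyB))
        exact mem_of_le B hBg.2.1 hBg.2.2.1 hBg.1 (x + y) hxyB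
      smul_mem' := by
        intro a x hx h1
        have hle : Ideal.span {a • x} + 𝔞 ≤ Ideal.span {x} + 𝔞 := by
          rw [Ideal.add_eq_sup, Ideal.add_eq_sup]
          refine sup_le_sup ?_ le_rfl
          rw [smul_eq_mul]
          exact Ideal.span_singleton_le_span_singleton.mpr (dvd_mul_left x a)
        have h2 := s.mono _ _ (hne _ (a_le (a • x))) (ile hle)
        rw [h1] at h2
        exact hx (le_antisymm (hsle1 _ (a_le x)) h2) }
  have h𝔞𝔪 : 𝔞 ≤ 𝔪 := fun x hx => mem_of_le 𝔞 h𝔞top ⟨h𝔞0, h𝔞eq⟩ le_rfl x hx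
  have h𝔪0 : 𝔪 ≠ 0 := le_ne h𝔞0 h𝔞𝔪
  have h𝔪top : 𝔪 ≠ ⊤ := by
    intro h
    have h1 : (1 : A) ∈ 𝔪 := by rw [h]; trivial
    refine h1 ?_
    rw [show Ideal.span {(1 : A)} + 𝔞 = ⊤ by
        rw [Ideal.add_eq_sup, Ideal.span_singleton_one, top_sup_eq],
      FractionalIdeal.coeIdeal_top, s.star_one]
  have h𝔪star : IsStarIdeal s 𝔪 := by
    refine ⟨h𝔪0, le_antisymm (fun z hz => ?_) (s.le_star _ (cne h𝔪0))⟩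
    obtain ⟨J, hJ0, hJle, hJfg, hzJ⟩ := hs ↑𝔪 (cne h𝔪0) z hz
    obtain ⟨J₁, hJ₁⟩ := FractionalIdeal.le_one_iff_exists_coeIdeal.mp
      (le_trans hJle FractionalIdeal.coeIdeal_le_one)
    have hJ₁𝔪 : J₁ ≤ 𝔪 := ige (le_trans hJ₁.le hJle)
    have hJ₁0 : J₁ ≠ 0 := by
      intro h
      apply hJ0
      rw [← hJ₁, h]
      simp
    have hJ₁fg : J₁.FG := by
      apply Submodule.fg_of_fg_map_injective (Algebra.linearMap A K)
        (IsFractionRing.injective A K)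
      have hm : Submodule.map (Algebra.linearMap A K) J₁ = (J : Submodule A K) := by
        rw [← hJ₁, FractionalIdeal.coe_coeIdeal]
        rfl
      rw [hm]
      exact hJfg
    obtain ⟨T, hT⟩ := hJ₁fg
    have hall : ∀ x ∈ T, s.star ↑(Ideal.span {x} + 𝔞) ≠ 1 := fun x hxT =>
      hJ₁𝔪 (hT ▸ Ideal.subset_span hxT)
    obtain ⟨B, hBg, hBe⟩ := main T hall
    have hzB : z ∈ (B : FractionalIdeal A⁰ K) := by
      have hle : s.star J ≤ ↑B := by
        rw [← hBe, ← hJ₁]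
        refine s.mono _ _ (cne hJ₁0) (ile ?_)
        rw [← hT]
        exact le_sup_left
      exact hle hzJ
    obtain ⟨b, hbB, hbz⟩ := (FractionalIdeal.mem_coeIdeal _).mp hzB
    have hb𝔪 : b ∈ 𝔪 := mem_of_le B hBg.2.1 hBg.2.2.1 hBg.1 b hbB
    exact hbz ▸ FractionalIdeal.mem_coeIdeal_of_mem _ hb𝔪
  have hmax : ∀ J : Ideal A, J ≠ ⊤ → IsStarIdeal s J → 𝔪 ≤ J → J = 𝔪 := fun J hJt hJs hle =>
    le_antisymm (fun x hx => mem_of_le J hJt hJs (le_trans h𝔞𝔪 hle) x hx) hle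
  refine ⟨𝔪, rfl, ⟨h𝔪top, h𝔪star, hmax⟩, h𝔞𝔪, ?_⟩
  intro 𝔫 h𝔫 h𝔞𝔫
  have h𝔫𝔪 : 𝔫 ≤ 𝔪 := fun x hx => mem_of_le 𝔫 h𝔫.1 h𝔫.2.1 h𝔞𝔫 x hx
  exact (h𝔫.2.2 𝔪 h𝔪top h𝔪star h𝔫𝔪).symm
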